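/- Let g be a finite-dimensional real Lie algebra, let h, x ∈ g and let c ∈ ℝ with c ≠ 0. If ⁅h, x⁆ = c • x, then x is a nilpotent element of g, i.e. the adjoint endomorphism ad x : g → g, y ↦ ⁅x, y⁆, is a nilpotent linear map. -/

import Mathlib

/-- An eigenvector of some `ad h` with nonzero eigenvalue is a nilpotent element,
i.e. its adjoint endomorphism is nilpotent. -/
theorem eigenvector_of_ad_isNilpotent
    {g : Type*} [LieRing g] [LieAlgebra ℝ g] [Module.Finite ℝ g]
    (h x : g) (c : ℝ) (hc : c ≠ 0) (hx : ⁅h, x⁆ = c • x) :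
    IsNilpotent (LieAlgebra.ad ℝ g x) := by
  letI : LieRing (Module.End ℝ g) := LieRing.ofAssociativeRing
  set A : Module.End ℝ g := LieAlgebra.ad ℝ g h with hA
  set N : Module.End ℝ g := LieAlgebra.ad ℝ g x with hN
  have hAN : ⁅A, N⁆ = c • N := by
    rw [hA, hN, ← LieHom.map_lie, hx, map_smul]
  -- key: ⁅A, N^k⁆ = (k • c) • N^k
  have key : ∀ k : ℕ, ⁅A, N ^ k⁆ = ((k : ℝ) * c) • N ^ k := by
    intro k
    induction k with
    | zero => simp [Ring.lie_def]
    | succ k ih =>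
      have hmul : ⁅A, N ^ k * N⁆ = ⁅A, N ^ k⁆ * N + N ^ k * ⁅A, N⁆ := by
        simp only [Ring.lie_def]
        noncomm_ring
      rw [pow_succ, hmul, ih, hAN, smul_mul_assoc, mul_smul_comm, ← pow_succ, ← add_smul]
      congr 1
      push_cast
      ring
  by_contra hnil
  -- the endomorphism B ↦ ⁅A, B⁆ of End ℝ g
  set Φ : Module.End ℝ (Module.End ℝ g) := LieAlgebra.ad ℝ (Module.End ℝ g) A with hΦ
  have hev : ∀ k : ℕ, Φ.HasEigenvalue ((k : ℝ) * c) := by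
    intro k
    have hk : N ^ k ≠ 0 := by
      intro h0
      exact hnil ⟨k, h0⟩
    exact Module.End.hasEigenvalue_of_hasEigenvector
      ⟨Module.End.mem_eigenspace_iff.2 (key k), hk⟩
  have hfin : Set.Finite Φ.HasEigenvalue := Module.End.finite_hasEigenvalue Φ
  have hinj : Function.Injective (fun k : ℕ => (k : ℝ) * c) := by
    intro a b hab
    simpa [hc] using mul_right_cancel₀ hc hab
  exact Set.infinite_of_injective_forall_mem hinj hev hfin
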